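/- arXiv:1509.01459 — 8 statements merged into one kernel-verified Lean document; each statement's English description precedes it below -/
import Mathlib

section
/- A nonzero S = (u,v,w) is a zero divisor for ⊛ (i.e., there is T ≠ 0 with S ⊛ T = 0) if and only if u³ - v³ + w³ + 3uvw = 0. -/
def jmul (S T : ℝ × ℝ × ℝ) : ℝ × ℝ × ℝ :=
  (S.1 * T.1 - S.2.1 * T.2.2 - S.2.2 * T.2.1,
   S.1 * T.2.1 + S.2.1 * T.1 - S.2.2 * T.2.2,
   S.1 * T.2.2 + S.2.1 * T.2.1 + S.2.2 * T.1)

noncomputable def jnorm (S : ℝ × ℝ × ℝ) : ℝ :=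
  Real.sqrt (S.1 ^ 2 + S.2.1 ^ 2 + S.2.2 ^ 2)

theorem stmt_10 (u v w : ℝ) (h : (u, v, w) ≠ ((0 : ℝ), (0 : ℝ), (0 : ℝ))) :
    (∃ T : ℝ × ℝ × ℝ, T ≠ 0 ∧ jmul (u, v, w) T = 0) ↔
      u ^ 3 - v ^ 3 + w ^ 3 + 3 * u * v * w = 0 := by
  set M : Matrix (Fin 3) (Fin 3) ℝ := !![u, -w, -v; v, u, -w; w, v, u] with hM
  have hdet : M.det = u ^ 3 - v ^ 3 + w ^ 3 + 3 * u * v * w := by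
    simp [hM, Matrix.det_fin_three]; ring
  rw [← hdet, ← Matrix.exists_mulVec_eq_zero_iff]
  constructor
  · rintro ⟨⟨x, y, z⟩, hT, hm⟩
    refine ⟨![x, y, z], ?_, ?_⟩
    · intro h0
      apply hT
      have h0x := congrFun h0 0
      have h0y := congrFun h0 1
      have h0z := congrFun h0 2
      simp at h0x h0y h0z
      simp [h0x, h0y, h0z, Prod.ext_iff]
    · have h1 := congrArg Prod.fst hm
      have h2 := congrArg (fun p => p.2.1) hm
      have h3 := congrArg (fun p => p.2.2) hm
      simp [jmul, Prod.ext_iff] at h1 h2 h3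
      funext i
      fin_cases i <;>
        simp [hM, Matrix.mulVec, dotProduct, Fin.sum_univ_three] <;> linarith
  · rintro ⟨t, ht, hm⟩
    refine ⟨(t 0, t 1, t 2), ?_, ?_⟩
    · intro h0
      apply ht
      simp [Prod.ext_iff] at h0
      funext i
      fin_cases i <;> simp [h0.1, h0.2.1, h0.2.2]
    · have h1 := congrFun hm 0
      have h2 := congrFun hm 1
      have h3 := congrFun hm 2
      simp [hM, Matrix.mulVec, dotProduct, Fin.sum_univ_three] at h1 h2 h3
      simp [jmul, Prod.ext_iff]
      refine ⟨by linarith, by linarith, by linarith⟩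
end

section
/- For all S, T ∈ ℝ³, ‖S ⊛ T‖² = ‖S‖²‖T‖² + 2{S}{T}, where {(u,v,w)} = uv - uw + vw and ‖·‖ is the Euclidean norm. -/
def jbr (S : ℝ × ℝ × ℝ) : ℝ := S.1 * S.2.1 - S.1 * S.2.2 + S.2.1 * S.2.2

lemma jnorm_sq (S : ℝ × ℝ × ℝ) : jnorm S ^ 2 = S.1 ^ 2 + S.2.1 ^ 2 + S.2.2 ^ 2 := by
  unfold jnorm
  rw [Real.sq_sqrt] <;> positivity

theorem stmt_11 : ∀ S T : ℝ × ℝ × ℝ,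
    jnorm (jmul S T) ^ 2 = jnorm S ^ 2 * jnorm T ^ 2 + 2 * jbr S * jbr T := by
  intro S T
  simp only [jnorm_sq, jmul, jbr]
  ring
end

section
/- For all S, T ∈ ℝ³, ‖S ⊛ T‖ ≤ √3 · ‖S‖ · ‖T‖, where ‖·‖ is the Euclidean norm. -/
theorem stmt_12 : ∀ S T : ℝ × ℝ × ℝ,
    jnorm (jmul S T) ≤ Real.sqrt 3 * jnorm S * jnorm T := by
  rintro ⟨a, b, c⟩ ⟨u, v, w⟩
  simp only [jmul, jnorm]
  have hA : (0:ℝ) ≤ a ^ 2 + b ^ 2 + c ^ 2 := by positivity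
  have hB : (0:ℝ) ≤ u ^ 2 + v ^ 2 + w ^ 2 := by positivity
  rw [← Real.sqrt_mul (by norm_num : (0:ℝ) ≤ 3), ← Real.sqrt_mul (by positivity)]
  apply Real.sqrt_le_sqrt
  nlinarith [sq_nonneg (a*u + b*w), sq_nonneg (a*u + c*v), sq_nonneg (b*w - c*v),
    sq_nonneg (a*v - b*u), sq_nonneg (a*v + c*w), sq_nonneg (b*u + c*w),
    sq_nonneg (a*w - b*v), sq_nonneg (a*w - c*u), sq_nonneg (b*v - c*u)]
end

section
/- If M₁ = (m₁, m₁+n₁, n₁) and M₂ = (m₂, m₂+n₂, n₂) are two nonzero elements of the plane M, then M₁ ⊛ M₂ ≠ 0; in fact ‖M₁ ⊛ M₂‖² = (3/2)‖M₁‖²‖M₂‖². -/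
theorem stmt_13 (m₁ n₁ m₂ n₂ : ℝ)
    (h₁ : ((m₁, m₁ + n₁, n₁) : ℝ × ℝ × ℝ) ≠ 0)
    (h₂ : ((m₂, m₂ + n₂, n₂) : ℝ × ℝ × ℝ) ≠ 0) :
    jmul (m₁, m₁ + n₁, n₁) (m₂, m₂ + n₂, n₂) ≠ 0 ∧
      jnorm (jmul (m₁, m₁ + n₁, n₁) (m₂, m₂ + n₂, n₂)) ^ 2 =
        (3 / 2) * jnorm (m₁, m₁ + n₁, n₁) ^ 2 * jnorm (m₂, m₂ + n₂, n₂) ^ 2 := by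
  have key : jnorm (jmul (m₁, m₁ + n₁, n₁) (m₂, m₂ + n₂, n₂)) ^ 2 =
      (3 / 2) * jnorm (m₁, m₁ + n₁, n₁) ^ 2 * jnorm (m₂, m₂ + n₂, n₂) ^ 2 := by
    rw [jnorm_sq, jnorm_sq, jnorm_sq]
    simp only [jmul]
    ring
  refine ⟨?_, key⟩
  intro hz
  have hs1 : (0:ℝ) < m₁ ^ 2 + (m₁ + n₁) ^ 2 + n₁ ^ 2 := by
    by_contra hle
    push_neg at hle
    have hm : m₁ = 0 ∧ m₁ + n₁ = 0 ∧ n₁ = 0 := by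
      refine ⟨?_, ?_, ?_⟩ <;>
        nlinarith [sq_nonneg m₁, sq_nonneg (m₁ + n₁), sq_nonneg n₁]
    exact h₁ (by simp [Prod.ext_iff, hm.1, hm.2.1, hm.2.2])
  have hs2 : (0:ℝ) < m₂ ^ 2 + (m₂ + n₂) ^ 2 + n₂ ^ 2 := by
    by_contra hle
    push_neg at hle
    have hm : m₂ = 0 ∧ m₂ + n₂ = 0 ∧ n₂ = 0 := by
      refine ⟨?_, ?_, ?_⟩ <;>
        nlinarith [sq_nonneg m₂, sq_nonneg (m₂ + n₂), sq_nonneg n₂]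
    exact h₂ (by simp [Prod.ext_iff, hm.1, hm.2.1, hm.2.2])
  have hpos : 0 < jnorm (jmul (m₁, m₁ + n₁, n₁) (m₂, m₂ + n₂, n₂)) ^ 2 := by
    rw [key, jnorm_sq, jnorm_sq]
    simp only
    positivity
  rw [hz] at hpos
  simp [jnorm] at hpos
end

section
/- The equation X ⊛ X = (r,0,0) with r < 0 has no solution X ∈ ℝ³; with r = 0 its unique solution is X = (0,0,0); and with r > 0 it has exactly 4 solutions: ±(√r, 0, 0) and ±(√r/3, 2√r/3, -2√r/3). -/
lemma key_aux (a b c r : ℝ) (h1 : a * a - b * c - c * b = r)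
    (h2 : a * b + b * a - c * c = 0) (h3 : a * c + b * b + c * a = 0) :
    (b = 0 ∧ c = 0 ∧ a ^ 2 = r) ∨ (b = 2 * a ∧ c = -2 * a ∧ 9 * a ^ 2 = r) := by
  have hcube : (b + c) * (b ^ 2 - b * c + c ^ 2) = 0 := by linear_combination b * h3 - c * h2
  rcases mul_eq_zero.mp hcube with h | h
  · have hc : c = -b := by linarith
    subst hc
    have hb : b * (b - 2 * a) = 0 := by linear_combination -h2
    rcases mul_eq_zero.mp hb with hb | hb
    · subst hb; left; refine ⟨rfl, by ring, by linear_combination h1⟩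
    · have hb2 : b = 2 * a := by linarith
      subst hb2
      right; refine ⟨rfl, by ring, by linear_combination h1⟩
  · have hb : b = 0 := by nlinarith [sq_nonneg b, sq_nonneg c, sq_nonneg (b - c)]
    have hc : c = 0 := by nlinarith [sq_nonneg (b - c)]
    subst hb; subst hc
    left; exact ⟨rfl, rfl, by linear_combination h1⟩

theorem stmt_14 (r : ℝ) :
    (r < 0 → ¬∃ X : ℝ × ℝ × ℝ, jmul X X = (r, 0, 0)) ∧
    (r = 0 → {X : ℝ × ℝ × ℝ | jmul X X = (r, 0, 0)} = {0}) ∧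
    (0 < r → {X : ℝ × ℝ × ℝ | jmul X X = (r, 0, 0)} =
      {(Real.sqrt r, 0, 0), (-Real.sqrt r, 0, 0),
       (Real.sqrt r / 3, 2 * Real.sqrt r / 3, -(2 * Real.sqrt r) / 3),
       (-(Real.sqrt r) / 3, -(2 * Real.sqrt r) / 3, 2 * Real.sqrt r / 3)}) := by
  refine ⟨?_, ?_, ?_⟩
  · rintro hr ⟨⟨a, b, c⟩, h⟩
    simp only [jmul, Prod.mk.injEq] at h
    obtain ⟨h1, h2, h3⟩ := h
    rcases key_aux a b c r h1 h2 h3 with ⟨_, _, ha⟩ | ⟨_, _, ha⟩ <;> nlinarith [sq_nonneg a]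
  · intro hr
    subst hr
    ext ⟨a, b, c⟩
    simp only [Set.mem_setOf_eq, Set.mem_singleton_iff, jmul, Prod.mk.injEq, Prod.ext_iff]
    constructor
    · rintro ⟨h1, h2, h3⟩
      rcases key_aux a b c 0 h1 h2 h3 with ⟨hb, hc, ha⟩ | ⟨hb, hc, ha⟩ <;>
        (have ha0 : a = 0 := by nlinarith) <;> subst ha0 <;> simp_all
    · rintro h
      obtain ⟨ha, hb, hc⟩ : a = 0 ∧ b = 0 ∧ c = 0 := by
        simpa [Prod.ext_iff] using h
      subst ha; subst hb; subst hc; norm_num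
  · intro hr
    have hs : Real.sqrt r * Real.sqrt r = r := Real.mul_self_sqrt hr.le
    ext ⟨a, b, c⟩
    simp only [Set.mem_setOf_eq, Set.mem_insert_iff, Set.mem_singleton_iff, jmul,
      Prod.mk.injEq]
    constructor
    · rintro ⟨h1, h2, h3⟩
      rcases key_aux a b c r h1 h2 h3 with ⟨hb, hc, ha⟩ | ⟨hb, hc, ha⟩
      · have : (a - Real.sqrt r) * (a + Real.sqrt r) = 0 := by nlinarith
        rcases mul_eq_zero.mp this with h | h
        · exact Or.inl ⟨by linarith, hb, hc⟩
        · exact Or.inr (Or.inl ⟨by linarith, hb, hc⟩)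
      · have : (3 * a - Real.sqrt r) * (3 * a + Real.sqrt r) = 0 := by nlinarith
        rcases mul_eq_zero.mp this with h | h
        · refine Or.inr (Or.inr (Or.inl ⟨by linarith, ?_, ?_⟩))
          · rw [hb]; linarith
          · rw [hc]; linarith
        · refine Or.inr (Or.inr (Or.inr ⟨by linarith, ?_, ?_⟩))
          · rw [hb]; linarith
          · rw [hc]; linarith
    · rintro (⟨ha, hb, hc⟩ | ⟨ha, hb, hc⟩ | ⟨ha, hb, hc⟩ | ⟨ha, hb, hc⟩) <;>
        subst ha <;> subst hb <;> subst hc <;>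
        exact ⟨by nlinarith, by nlinarith, by nlinarith⟩
end

section
/- The idempotents of (ℝ³, ⊛), i.e., solutions of X ⊛ X = X, are exactly (0,0,0), (1,0,0), (1/3)(1,-1,1), and (1/3)(2,1,-1). -/
theorem stmt_15 : {X : ℝ × ℝ × ℝ | jmul X X = X} =
    {((0 : ℝ), (0 : ℝ), (0 : ℝ)), (1, 0, 0), (1 / 3, -(1 / 3), 1 / 3),
     (2 / 3, 1 / 3, -(1 / 3))} := by
  ext ⟨a, b, c⟩
  simp only [Set.mem_setOf_eq, Set.mem_insert_iff, Set.mem_singleton_iff, jmul,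
    Prod.mk.injEq]
  constructor
  · rintro ⟨h1, h2, h3⟩
    have hbc : (b + c) * (2 * a + b - c - 1) = 0 := by linear_combination h2 + h3
    rcases mul_eq_zero.mp hbc with h | h
    · have hc : c = -b := by linarith
      subst hc
      have hb : b * (2 * a - b - 1) = 0 := by linear_combination h2
      rcases mul_eq_zero.mp hb with hb0 | hb1
      · subst hb0
        have ha : a * (a - 1) = 0 := by linear_combination h1
        rcases mul_eq_zero.mp ha with ha | ha
        · left; exact ⟨ha, rfl, neg_zero⟩
        · right; left; exact ⟨by linarith, rfl, neg_zero⟩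
      · have hb : b = 2 * a - 1 := by linarith
        subst hb
        have ha : (3 * a - 1) * (3 * a - 2) = 0 := by linear_combination h1
        rcases mul_eq_zero.mp ha with ha | ha
        · right; right; left
          refine ⟨by linarith, by linarith, by linarith⟩
        · right; right; right
          refine ⟨by linarith, by linarith, by linarith⟩
    · have hc : c = 2 * a + b - 1 := by linarith
      subst hc
      exfalso
      have key : b ^ 2 + (2 * a - 1) ^ 2 ≤ 0 := by
        nlinarith [h3, sq_nonneg (b + 2 * a - 1)]
      have hb : b = 0 := by nlinarith [sq_nonneg b, sq_nonneg (2 * a - 1)]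
      have ha : a = 1 / 2 := by nlinarith [sq_nonneg b, sq_nonneg (2 * a - 1)]
      subst hb; subst ha
      nlinarith [h1]
  · rintro (⟨h1, h2, h3⟩ | ⟨h1, h2, h3⟩ | ⟨h1, h2, h3⟩ | ⟨h1, h2, h3⟩) <;>
      subst h1 <;> subst h2 <;> subst h3 <;> norm_num
end

section
/- There is no X ∈ ℝ³ with X ⊛ X = (-1,0,0); consequently, there is no unital ℝ-algebra homomorphism from ℂ into (ℝ³, ⊛). -/
lemma no_sqrt_neg_one : ¬∃ X : ℝ × ℝ × ℝ, jmul X X = (-1, 0, 0) := by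
  rintro ⟨⟨a, b, c⟩, h⟩
  simp only [jmul, Prod.mk.injEq] at h
  obtain ⟨h1, h2, h3⟩ := h
  nlinarith [sq_nonneg a, sq_nonneg (a^2+1), sq_nonneg (b*c), sq_nonneg (b+c),
    sq_nonneg (b-c), mul_self_nonneg (a*b), mul_self_nonneg (a*c)]

theorem stmt_16 :
    (¬∃ X : ℝ × ℝ × ℝ, jmul X X = (-1, 0, 0)) ∧
    ¬∃ f : ℂ → ℝ × ℝ × ℝ,
      (∀ z w : ℂ, f (z * w) = jmul (f z) (f w)) ∧
      (∀ z w : ℂ, f (z + w) = f z + f w) ∧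
      (∀ (r : ℝ) (z : ℂ), f (r • z) = r • f z) ∧
      f 1 = (1, 0, 0) := by
  refine ⟨no_sqrt_neg_one, ?_⟩
  rintro ⟨f, hmul, hadd, hsmul, hone⟩
  apply no_sqrt_neg_one
  refine ⟨f Complex.I, ?_⟩
  have h1 : f (Complex.I * Complex.I) = jmul (f Complex.I) (f Complex.I) := hmul _ _
  rw [Complex.I_mul_I] at h1
  have h2 : f (-1) = ((-1 : ℝ) • f 1) := by
    have := hsmul (-1) 1
    simpa using this
  rw [h2, hone] at h1
  rw [← h1]
  norm_num [Prod.smul_def]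
end

section
/- The map sending (u,v,w) ∈ ℝ³ to the 3×3 Toeplitz matrix with rows (u, -w, -v), (v, u, -w), (w, v, u) is an injective unital ℝ-algebra homomorphism from (ℝ³, ⊛) into the 3×3 real matrices; in particular the matrix image of S ⊛ T equals the matrix product of the images of S and T, and det of the image of (u,v,w) equals u³ - v³ + w³ + 3uvw. -/
def toMat (S : ℝ × ℝ × ℝ) : Matrix (Fin 3) (Fin 3) ℝ :=
  !![S.1, -S.2.2, -S.2.1;
     S.2.1, S.1, -S.2.2;
     S.2.2, S.2.1, S.1]

theorem stmt_19 :
    Function.Injective toMat ∧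
    toMat (1, 0, 0) = 1 ∧
    (∀ S T : ℝ × ℝ × ℝ, toMat (jmul S T) = toMat S * toMat T) ∧
    (∀ S T : ℝ × ℝ × ℝ, toMat (S + T) = toMat S + toMat T) ∧
    (∀ (r : ℝ) (S : ℝ × ℝ × ℝ), toMat (r • S) = r • toMat S) ∧
    (∀ S : ℝ × ℝ × ℝ, (toMat S).det =
      S.1 ^ 3 - S.2.1 ^ 3 + S.2.2 ^ 3 + 3 * S.1 * S.2.1 * S.2.2) := by
  refine ⟨?_, ?_, ?_, ?_, ?_, ?_⟩
  · intro ⟨a, b, c⟩ ⟨a', b', c'⟩ h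
    have h0 := congrFun (congrFun h 0) 0
    have h1 := congrFun (congrFun h 1) 0
    have h2 := congrFun (congrFun h 2) 0
    simp [toMat] at h0 h1 h2
    simp_all
  · simp [toMat, Matrix.one_fin_three]
  · intro S T
    ext i j
    fin_cases i <;> fin_cases j <;>
      simp [toMat, jmul, Matrix.mul_apply, Fin.sum_univ_three] <;> ring
  · intro S T
    ext i j
    fin_cases i <;> fin_cases j <;> simp [toMat, Prod.fst_add, Prod.snd_add] <;> ring
  · intro r S
    ext i j
    fin_cases i <;> fin_cases j <;> simp [toMat, Prod.smul_fst, Prod.smul_snd] <;> ring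
  · intro S
    simp [toMat, Matrix.det_fin_three]
    ring
end
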